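/- If B is a pseudotangent set of a closed set A at x ∈ A and y ∈ B, then B − y is also a pseudotangent set of A at x. -/

import Mathlib

open Metric Set Filter Topology Pointwise

noncomputable section

/-- Excess of `A` over `B`: `sup_{a ∈ A} inf_{b ∈ B} |a - b|` (extended-real valued). -/
def ex {n : ℕ} (A B : Set (EuclideanSpace ℝ (Fin n))) : ENNReal :=
  ⨆ a ∈ A, EMetric.infEdist a B

/-- Relative excess of `A` in the closed ball `B(x,r)` over `B`. -/
def relEx {n : ℕ} (x : EuclideanSpace ℝ (Fin n)) (r : ℝ)
    (A B : Set (EuclideanSpace ℝ (Fin n))) : ℝ :=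
  (ex (A ∩ closedBall x r) B).toReal / r

/-- Relative Walkup–Wets distance in `B(x,r)`. -/
def WW {n : ℕ} (x : EuclideanSpace ℝ (Fin n)) (r : ℝ)
    (A B : Set (EuclideanSpace ℝ (Fin n))) : ℝ :=
  max (relEx x r A B) (relEx x r B A)

/-- Attouch–Wets convergence of a sequence of sets to `L` (all sets containing `0`). -/
def AWT {n : ℕ} (F : ℕ → Set (EuclideanSpace ℝ (Fin n)))
    (L : Set (EuclideanSpace ℝ (Fin n))) : Prop :=
  ∀ r : ℝ, 0 < r → Filter.Tendsto (fun i => WW (0 : EuclideanSpace ℝ (Fin n)) r (F i) L)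
    Filter.atTop (nhds 0)

/-- The blow-up `(A - x)/t` of a set `A` at `x` with scale `t`. -/
def blowup {n : ℕ} (A : Set (EuclideanSpace ℝ (Fin n))) (x : EuclideanSpace ℝ (Fin n))
    (t : ℝ) : Set (EuclideanSpace ℝ (Fin n)) :=
  (fun a => t⁻¹ • (a - x)) '' A

/-- `T` is a pseudotangent set of `A` at `x` directed along `D`. -/
def IsPseudoTangentAlong {n : ℕ} (A : Set (EuclideanSpace ℝ (Fin n)))
    (x : EuclideanSpace ℝ (Fin n)) (D : Set (EuclideanSpace ℝ (Fin n)))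
    (T : Set (EuclideanSpace ℝ (Fin n))) : Prop :=
  IsClosed T ∧ (0 : EuclideanSpace ℝ (Fin n)) ∈ T ∧
    ∃ (xs : ℕ → EuclideanSpace ℝ (Fin n)) (rs : ℕ → ℝ),
      (∀ i, xs i ∈ A) ∧ (∀ i, 0 < rs i) ∧
      Filter.Tendsto xs Filter.atTop (nhds x) ∧
      Filter.Tendsto rs Filter.atTop (nhds 0) ∧
      (∀ i, (rs i)⁻¹ • (xs i - x) ∈ D) ∧
      AWT (fun i => blowup A (xs i) (rs i)) T

/-- `T` is a pseudotangent set of `A` at `x`. -/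
def IsPseudoTangent {n : ℕ} (A : Set (EuclideanSpace ℝ (Fin n)))
    (x : EuclideanSpace ℝ (Fin n)) (T : Set (EuclideanSpace ℝ (Fin n))) : Prop :=
  IsPseudoTangentAlong A x Set.univ T

/-- `T` is a tangent set of `A` at `x`. -/
def IsTangent {n : ℕ} (A : Set (EuclideanSpace ℝ (Fin n)))
    (x : EuclideanSpace ℝ (Fin n)) (T : Set (EuclideanSpace ℝ (Fin n))) : Prop :=
  IsClosed T ∧ (0 : EuclideanSpace ℝ (Fin n)) ∈ T ∧
    ∃ rs : ℕ → ℝ, (∀ i, 0 < rs i) ∧ Filter.Tendsto rs Filter.atTop (nhds 0) ∧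
      AWT (fun i => blowup A x (rs i)) T

variable {n : ℕ}

lemma ex_mono {A A' B : Set (EuclideanSpace ℝ (Fin n))} (h : A ⊆ A') : ex A B ≤ ex A' B :=
  iSup₂_le fun a ha => le_iSup₂_of_le a (h ha) le_rfl

lemma ex_le_ofReal {A B : Set (EuclideanSpace ℝ (Fin n))} {r : ℝ}
    (h0 : (0 : EuclideanSpace ℝ (Fin n)) ∈ B) :
    ex (A ∩ closedBall 0 r) B ≤ ENNReal.ofReal r := by
  apply iSup₂_le
  rintro a ⟨-, ha⟩
  refine (EMetric.infEdist_le_edist_of_mem h0).trans ?_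
  rw [edist_dist]
  exact ENNReal.ofReal_le_ofReal (mem_closedBall.mp ha)

lemma isometry_subRight (y : EuclideanSpace ℝ (Fin n)) :
    Isometry (fun z : EuclideanSpace ℝ (Fin n) => z - y) :=
  Isometry.of_dist_eq fun a b => dist_sub_right a b y

lemma ex_translate_le (A B : Set (EuclideanSpace ℝ (Fin n))) (v y : EuclideanSpace ℝ (Fin n))
    (r : ℝ) :
    ex ((fun z => z - v) '' A ∩ closedBall 0 r) ((fun z => z - y) '' B)
      ≤ ex (A ∩ closedBall 0 (r + ‖v‖)) B + edist v y := by
  apply iSup₂_le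
  rintro p ⟨⟨a, ha, rfl⟩, hp⟩
  have h1 : EMetric.infEdist (a - v) ((fun z => z - y) '' B)
      = EMetric.infEdist (a - v + y) B := by
    conv_lhs => rw [show a - v = (fun z : EuclideanSpace ℝ (Fin n) => z - y) (a - v + y) by
      simp]
    exact EMetric.infEdist_image (isometry_subRight y)
  have h2 : EMetric.infEdist (a - v + y) B ≤ EMetric.infEdist a B + edist v y := by
    refine (EMetric.infEdist_le_infEdist_add_edist (y := a)).trans ?_
    gcongr
    · exact le_rfl
    rw [edist_comm, edist_dist, edist_dist, dist_eq_norm, dist_eq_norm]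
    apply le_of_eq
    congr 1
    abel_nf
  have hmem : a ∈ A ∩ closedBall 0 (r + ‖v‖) := by
    refine ⟨ha, mem_closedBall.mpr ?_⟩
    have : ‖a - v‖ ≤ r := by simpa [dist_eq_norm] using mem_closedBall.mp hp
    calc dist a 0 = ‖(a - v) + v‖ := by simp [dist_eq_norm]
    _ ≤ ‖a - v‖ + ‖v‖ := norm_add_le _ _
    _ ≤ r + ‖v‖ := by linarith
  calc EMetric.infEdist (a - v) ((fun z => z - y) '' B)
      ≤ EMetric.infEdist a B + edist v y := by rw [h1]; exact h2
    _ ≤ ex (A ∩ closedBall 0 (r + ‖v‖)) B + edist v y := by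
        gcongr; exact le_iSup₂_of_le a hmem le_rfl

lemma relEx_nonneg {x : EuclideanSpace ℝ (Fin n)} {r : ℝ} (hr : 0 ≤ r)
    (A B : Set (EuclideanSpace ℝ (Fin n))) : 0 ≤ relEx x r A B :=
  div_nonneg ENNReal.toReal_nonneg hr

lemma WW_nonneg {x : EuclideanSpace ℝ (Fin n)} {r : ℝ} (hr : 0 ≤ r)
    (A B : Set (EuclideanSpace ℝ (Fin n))) : 0 ≤ WW x r A B :=
  le_max_of_le_left (relEx_nonneg hr A B)

lemma WW_translate_le (C B : Set (EuclideanSpace ℝ (Fin n))) (v y : EuclideanSpace ℝ (Fin n))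
    (r R : ℝ) (hr : 0 < r) (hC0 : (0 : EuclideanSpace ℝ (Fin n)) ∈ C)
    (hB0 : (0 : EuclideanSpace ℝ (Fin n)) ∈ B) (hvR : r + ‖v‖ ≤ R) (hyR : r + ‖y‖ ≤ R) :
    WW 0 r ((fun z => z - v) '' C) ((fun z => z - y) '' B)
      ≤ (WW 0 R C B * R + dist v y) / r := by
  have hR : 0 < R := lt_of_lt_of_le (by positivity) hvR
  have key : ∀ (S T : Set (EuclideanSpace ℝ (Fin n))) (u w : EuclideanSpace ℝ (Fin n)),
      (0 : EuclideanSpace ℝ (Fin n)) ∈ T → r + ‖u‖ ≤ R →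
      relEx 0 r ((fun z => z - u) '' S) ((fun z => z - w) '' T)
        ≤ (relEx 0 R S T * R + dist u w) / r := by
    intro S T u w hT0 huR
    have h1 : ex ((fun z => z - u) '' S ∩ closedBall 0 r) ((fun z => z - w) '' T)
        ≤ ex (S ∩ closedBall 0 R) T + edist u w :=
      (ex_translate_le S T u w r).trans (by gcongr; exact ex_mono (by gcongr))
    have hfin : ex (S ∩ closedBall 0 R) T ≠ ⊤ :=
      ((ex_le_ofReal hT0).trans_lt ENNReal.ofReal_lt_top).ne
    have h2 : (ex ((fun z => z - u) '' S ∩ closedBall 0 r) ((fun z => z - w) '' T)).toReal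
        ≤ (ex (S ∩ closedBall 0 R) T).toReal + dist u w := by
      have := ENNReal.toReal_mono (ENNReal.add_ne_top.mpr ⟨hfin, edist_ne_top _ _⟩) h1
      rwa [ENNReal.toReal_add hfin (edist_ne_top _ _), ← dist_edist] at this
    have h3 : (ex (S ∩ closedBall 0 R) T).toReal = relEx 0 R S T * R := by
      rw [relEx, div_mul_cancel₀ _ hR.ne']
    rw [relEx]
    rw [h3] at h2
    exact (div_le_div_iff_of_pos_right hr).mpr h2
  have key1 := key C B v y hB0 hvR
  have key2 := key B C y v hC0 hyR
  rw [dist_comm y v] at key2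
  refine max_le (key1.trans ?_) (key2.trans ?_) <;>
    refine (div_le_div_iff_of_pos_right hr).mpr (add_le_add_left
      (mul_le_mul_of_nonneg_right ?_ hR.le) _)
  · exact le_max_left _ _
  · exact le_max_right _ _


lemma blowup_translate (A : Set (EuclideanSpace ℝ (Fin n))) (x a : EuclideanSpace ℝ (Fin n))
    (t : ℝ) :
    blowup A a t = (fun z => z - t⁻¹ • (a - x)) '' blowup A x t := by
  rw [blowup, blowup, Set.image_image]
  apply Set.image_congr'
  intro b
  rw [← smul_sub]
  congr 1
  abel

lemma zero_mem_blowup {A : Set (EuclideanSpace ℝ (Fin n))} {x : EuclideanSpace ℝ (Fin n)}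
    (hx : x ∈ A) (t : ℝ) : (0 : EuclideanSpace ℝ (Fin n)) ∈ blowup A x t :=
  ⟨x, hx, by simp⟩


/-- Pseudotangent sets are invariant under translation by their own points. -/
theorem isPseudoTangent_translate {n : ℕ} (A : Set (EuclideanSpace ℝ (Fin n)))
    (hAc : IsClosed A) (x : EuclideanSpace ℝ (Fin n)) (hx : x ∈ A)
    (B : Set (EuclideanSpace ℝ (Fin n))) (hB : IsPseudoTangent A x B)
    (y : EuclideanSpace ℝ (Fin n)) (hy : y ∈ B) :
    IsPseudoTangent A x ((fun b => b - y) '' B) := by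
  obtain ⟨hBc, hB0, xs, rs, hxsA, hrs, hxsx, hrs0, -, hAW⟩ := hB
  set C : ℕ → Set (EuclideanSpace ℝ (Fin n)) := fun i => blowup A (xs i) (rs i) with hC
  have hC0 : ∀ i, (0 : EuclideanSpace ℝ (Fin n)) ∈ C i := fun i => zero_mem_blowup (hxsA i) _
  -- Step 1: infEdist y (C i) → 0
  set r₀ : ℝ := ‖y‖ + 1 with hr₀
  have hr₀pos : 0 < r₀ := by positivity
  have hyball : y ∈ B ∩ closedBall 0 r₀ := ⟨hy, by
    simp only [mem_closedBall, dist_eq_norm, sub_zero, hr₀]; linarith⟩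
  have hinf : Filter.Tendsto (fun i => (EMetric.infEdist y (C i)).toReal)
      Filter.atTop (nhds 0) := by
    apply squeeze_zero (fun i => ENNReal.toReal_nonneg)
      (g := fun i => WW 0 r₀ (C i) B * r₀)
    · intro i
      have h1 : EMetric.infEdist y (C i) ≤ ex (B ∩ closedBall 0 r₀) (C i) :=
        le_iSup₂_of_le y hyball le_rfl
      have h2 : (EMetric.infEdist y (C i)).toReal
          ≤ (ex (B ∩ closedBall 0 r₀) (C i)).toReal :=
        ENNReal.toReal_mono ((ex_le_ofReal (hC0 i)).trans_lt ENNReal.ofReal_lt_top).ne h1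
      refine h2.trans ?_
      have h3 : (ex (B ∩ closedBall 0 r₀) (C i)).toReal = relEx 0 r₀ B (C i) * r₀ := by
        rw [relEx, div_mul_cancel₀ _ hr₀pos.ne']
      rw [h3]
      exact mul_le_mul_of_nonneg_right (le_max_right _ _) hr₀pos.le
    · simpa using (hAW r₀ hr₀pos).mul_const r₀
  -- Step 2: choose v i ∈ C i close to y
  have hchoose : ∀ i : ℕ, ∃ w ∈ C i, edist y w
      < EMetric.infEdist y (C i) + ENNReal.ofReal (1 / (i + 1)) := by
    intro i
    apply EMetric.infEdist_lt_iff.mp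
    refine ENNReal.lt_add_right ?_ (by positivity)
    exact ((EMetric.infEdist_le_edist_of_mem (hC0 i)).trans_lt (edist_lt_top y 0)).ne
  choose v hvC hvlt using hchoose
  have hdist : ∀ i : ℕ, dist (v i) y
      ≤ (EMetric.infEdist y (C i)).toReal + 1 / (i + 1) := by
    intro i
    have hfin : EMetric.infEdist y (C i) + ENNReal.ofReal (1 / (i + 1)) ≠ ⊤ :=
      ENNReal.add_ne_top.mpr
        ⟨((EMetric.infEdist_le_edist_of_mem (hC0 i)).trans_lt (edist_lt_top y 0)).ne,
          ENNReal.ofReal_ne_top⟩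
    have := ENNReal.toReal_mono hfin (hvlt i).le
    rw [ENNReal.toReal_add (ENNReal.add_ne_top.mp hfin).1 ENNReal.ofReal_ne_top,
      ENNReal.toReal_ofReal (by positivity), ← dist_edist, dist_comm] at this
    exact this
  have hvy : Filter.Tendsto v Filter.atTop (nhds y) := by
    rw [tendsto_iff_dist_tendsto_zero]
    apply squeeze_zero (fun i => dist_nonneg) hdist
    have : Filter.Tendsto (fun i : ℕ => 1 / ((i : ℝ) + 1)) Filter.atTop (nhds 0) :=
      tendsto_one_div_add_atTop_nhds_zero_nat
    simpa using hinf.add this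
  -- Step 3: extract points a i ∈ A
  have hmem : ∀ i : ℕ, ∃ a ∈ A, (rs i)⁻¹ • (a - xs i) = v i := fun i => hvC i
  choose a haA hav using hmem
  have ha_eq : ∀ i, a i = xs i + rs i • v i := by
    intro i
    rw [← hav i, smul_inv_smul₀ (hrs i).ne']
    abel
  have hax : Filter.Tendsto a Filter.atTop (nhds x) := by
    have : Filter.Tendsto (fun i => xs i + rs i • v i) Filter.atTop (nhds (x + (0:ℝ) • y)) :=
      hxsx.add (hrs0.smul hvy)
    simp only [zero_smul, add_zero] at this
    exact this.congr fun i => (ha_eq i).symm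
  -- Step 4: blowup at a i is translate of C i
  have hbl : ∀ i, blowup A (a i) (rs i) = (fun z => z - v i) '' C i := by
    intro i
    rw [blowup_translate A (xs i) (a i) (rs i), hav i]
  -- Step 5: AWT convergence
  have hAWT : AWT (fun i => blowup A (a i) (rs i)) ((fun b => b - y) '' B) := by
    intro r hr
    set R : ℝ := r + ‖y‖ + 1 with hR
    have hRpos : 0 < R := by positivity
    have hbd : ∀ᶠ i in Filter.atTop,
        WW 0 r (blowup A (a i) (rs i)) ((fun b => b - y) '' B)
          ≤ (WW 0 R (C i) B * R + dist (v i) y) / r := by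
      filter_upwards [Metric.tendsto_nhds.mp hvy 1 one_pos] with i hi
      rw [hbl i]
      refine WW_translate_le (C i) B (v i) y r R hr (hC0 i) hB0 ?_ ?_
      · have : ‖v i‖ ≤ ‖y‖ + 1 := by
          calc ‖v i‖ = ‖(v i - y) + y‖ := by congr 1; abel
          _ ≤ ‖v i - y‖ + ‖y‖ := norm_add_le _ _
          _ ≤ ‖y‖ + 1 := by
              rw [dist_eq_norm] at hi; linarith [hi.le]
        rw [hR]; linarith
      · rw [hR]; linarith
    refine squeeze_zero' (Filter.Eventually.of_forall fun i => WW_nonneg hr.le _ _) hbd ?_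
    have h1 : Filter.Tendsto (fun i => WW 0 R (C i) B * R) Filter.atTop (nhds 0) := by
      simpa using (hAW R hRpos).mul_const R
    have h2 : Filter.Tendsto (fun i => dist (v i) y) Filter.atTop (nhds 0) :=
      tendsto_iff_dist_tendsto_zero.mp hvy
    simpa using (h1.add h2).div_const r
  -- conclude
  refine ⟨?_, ⟨y, hy, sub_self y⟩, a, rs, haA, hrs, hax, hrs0, fun i => Set.mem_univ _, hAWT⟩
  exact (Homeomorph.subRight y).isClosedMap B hBc
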